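/- Consider the parameter space Θ_1 = [(−100,0) ∪ (0,100)]^{11} × (0.01,100)^{15} ⊂ ℝ^{26} and, for θ = (θ^{(1)}, ..., θ^{(26)}) ∈ Θ_1, the 12 × 12 matrix Σ_1(θ) defined as the SEM-implied covariance structure with Λ_1 = (1, θ^{(1)}, θ^{(2)}, θ^{(3)})^T ∈ ℝ^{4×1}, Λ_2 ∈ ℝ^{8×2} with first column (1, θ^{(4)}, θ^{(5)}, θ^{(6)}, 0, 0, 0, 0)^T and second column (0, 0, 0, 0, 1, θ^{(7)}, θ^{(8)}, θ^{(9)})^T, Γ = (θ^{(10)}, θ^{(11)})^T ∈ ℝ^{2×1}, Σ_ξξ = θ^{(12)} (a 1 × 1 matrix), Σ_δδ = diag(θ^{(13)}, θ^{(14)}, θ^{(15)}, θ^{(16)}), Σ_εε = diag(θ^{(17)}, ..., θ^{(24)}), and Σ_ζζ = diag(θ^{(25)}, θ^{(26)}). Let θ_{1,0} = (0.5, 0.8, 0.3, 1.3, 0.8, 0.5, 0.9, 0.7, 1.1, −0.6, 0.9, 0.64, 0.36, 1.44, 0.64, 0.49, 1.69, 0.25, 0.49, 0.36, 0.81, 0.64,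 1.44, 1.21, 1.96, 0.36) ∈ Θ_1. Then for every θ_1 ∈ Θ_1, Σ_1(θ_1) = Σ_1(θ_{1,0}) implies θ_1 = θ_{1,0}. -/

import Mathlib

open Matrix

/-- The SEM-implied covariance structure: given loading matrices `L1 : p1 × k1`,
`L2 : p2 × k2`, `G : k2 × k1` (with `Ψ = I`, i.e. `B = 0`) and covariance matrices
`Sxx, Sdd, See, Szz`, it is the block matrix
`[[L1 Sxx L1ᵀ + Sdd, L1 Sxx Gᵀ L2ᵀ], [(L1 Sxx Gᵀ L2ᵀ)ᵀ, L2 (G Sxx Gᵀ + Szz) L2ᵀ + See]]`. -/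
noncomputable def semCov {p1 p2 k1 k2 : ℕ}
    (L1 : Matrix (Fin p1) (Fin k1) ℝ) (L2 : Matrix (Fin p2) (Fin k2) ℝ)
    (G : Matrix (Fin k2) (Fin k1) ℝ)
    (Sxx : Matrix (Fin k1) (Fin k1) ℝ) (Sdd : Matrix (Fin p1) (Fin p1) ℝ)
    (See : Matrix (Fin p2) (Fin p2) ℝ) (Szz : Matrix (Fin k2) (Fin k2) ℝ) :
    Matrix (Fin p1 ⊕ Fin p2) (Fin p1 ⊕ Fin p2) ℝ :=
  Matrix.fromBlocks (L1 * Sxx * L1ᵀ + Sdd) (L1 * Sxx * Gᵀ * L2ᵀ)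
    (L1 * Sxx * Gᵀ * L2ᵀ)ᵀ (L2 * (G * Sxx * Gᵀ + Szz) * L2ᵀ + See)

/-- The implied covariance structure of Model 1, with parameter
`θ = (θ^(1), …, θ^(26))` (0-indexed as `θ 0, …, θ 25`). -/
noncomputable def Sigma1 (θ : Fin 26 → ℝ) : Matrix (Fin 4 ⊕ Fin 8) (Fin 4 ⊕ Fin 8) ℝ :=
  semCov
    (Matrix.of fun i (_ : Fin 1) => ![1, θ 0, θ 1, θ 2] i)
    (Matrix.of fun (i : Fin 8) (j : Fin 2) =>
      ![![1, 0], ![θ 3, 0], ![θ 4, 0], ![θ 5, 0],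
        ![0, 1], ![0, θ 6], ![0, θ 7], ![0, θ 8]] i j)
    (Matrix.of fun (i : Fin 2) (_ : Fin 1) => ![θ 9, θ 10] i)
    (Matrix.of fun (_ _ : Fin 1) => θ 11)
    (Matrix.diagonal ![θ 12, θ 13, θ 14, θ 15])
    (Matrix.diagonal ![θ 16, θ 17, θ 18, θ 19, θ 20, θ 21, θ 22, θ 23])
    (Matrix.diagonal ![θ 24, θ 25])

/-- The parameter space `Θ₁ = [(−100,0) ∪ (0,100)]^{11} × (0.01,100)^{15}` of Model 1. -/
def Theta1 : Set (Fin 26 → ℝ) :=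
  {θ | (∀ i : Fin 26, (i : ℕ) < 11 →
          θ i ∈ Set.Ioo (-100 : ℝ) 0 ∪ Set.Ioo (0 : ℝ) 100) ∧
       (∀ i : Fin 26, 11 ≤ (i : ℕ) → θ i ∈ Set.Ioo (0.01 : ℝ) 100)}

/-- The true parameter value `θ_{1,0}` of Model 1. -/
noncomputable def theta10 : Fin 26 → ℝ :=
  ![0.5, 0.8, 0.3, 1.3, 0.8, 0.5, 0.9, 0.7, 1.1, -0.6, 0.9, 0.64, 0.36, 1.44,
    0.64, 0.49, 1.69, 0.25, 0.49, 0.36, 0.81, 0.64, 1.44, 1.21, 1.96, 0.36]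

set_option maxHeartbeats 4000000

lemma cvA {α : Type*} (x : α) (u : Fin 7 → α) : Matrix.vecCons x u (5 : Fin 8) = u 4 := rfl
lemma cvB {α : Type*} (x : α) (u : Fin 7 → α) : Matrix.vecCons x u (6 : Fin 8) = u 5 := rfl
lemma cvC {α : Type*} (x : α) (u : Fin 7 → α) : Matrix.vecCons x u (7 : Fin 8) = u 6 := rfl
lemma cvD {α : Type*} (x : α) (u : Fin 6 → α) : Matrix.vecCons x u (5 : Fin 7) = u 4 := rfl
lemma cvE {α : Type*} (x : α) (u : Fin 6 → α) : Matrix.vecCons x u (6 : Fin 7) = u 5 := rfl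
lemma cvF {α : Type*} (x : α) (u : Fin 5 → α) : Matrix.vecCons x u (5 : Fin 6) = u 4 := rfl
lemma fv1 : ((3 : Fin 4) : ℕ) = 3 := rfl
lemma fv2 : ((4 : Fin 8) : ℕ) = 4 := rfl
lemma fv3 : ((5 : Fin 8) : ℕ) = 5 := rfl
lemma fv4 : ((2 : Fin 4) : ℕ) = 2 := rfl
lemma fv5 : ((6 : Fin 8) : ℕ) = 6 := rfl
lemma fv6 : ((7 : Fin 8) : ℕ) = 7 := rfl
lemma ht0 : theta10 0 = 0.5 := rfl
lemma ht1 : theta10 1 = 0.8 := rfl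
lemma ht2 : theta10 2 = 0.3 := rfl
lemma ht3 : theta10 3 = 1.3 := rfl
lemma ht4 : theta10 4 = 0.8 := rfl
lemma ht5 : theta10 5 = 0.5 := rfl
lemma ht6 : theta10 6 = 0.9 := rfl
lemma ht7 : theta10 7 = 0.7 := rfl
lemma ht8 : theta10 8 = 1.1 := rfl
lemma ht9 : theta10 9 = -0.6 := rfl
lemma ht10 : theta10 10 = 0.9 := rfl
lemma ht11 : theta10 11 = 0.64 := rfl
lemma ht12 : theta10 12 = 0.36 := rfl
lemma ht13 : theta10 13 = 1.44 := rfl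
lemma ht14 : theta10 14 = 0.64 := rfl
lemma ht15 : theta10 15 = 0.49 := rfl
lemma ht16 : theta10 16 = 1.69 := rfl
lemma ht17 : theta10 17 = 0.25 := rfl
lemma ht18 : theta10 18 = 0.49 := rfl
lemma ht19 : theta10 19 = 0.36 := rfl
lemma ht20 : theta10 20 = 0.81 := rfl
lemma ht21 : theta10 21 = 0.64 := rfl
lemma ht22 : theta10 22 = 1.44 := rfl
lemma ht23 : theta10 23 = 1.21 := rfl
lemma ht24 : theta10 24 = 1.96 := rfl
lemma ht25 : theta10 25 = 0.36 := rfl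

lemma htm0 : theta10 ⟨0, by norm_num⟩ = 0.5 := rfl
lemma htm1 : theta10 ⟨1, by norm_num⟩ = 0.8 := rfl
lemma htm2 : theta10 ⟨2, by norm_num⟩ = 0.3 := rfl
lemma htm3 : theta10 ⟨3, by norm_num⟩ = 1.3 := rfl
lemma htm4 : theta10 ⟨4, by norm_num⟩ = 0.8 := rfl
lemma htm5 : theta10 ⟨5, by norm_num⟩ = 0.5 := rfl
lemma htm6 : theta10 ⟨6, by norm_num⟩ = 0.9 := rfl
lemma htm7 : theta10 ⟨7, by norm_num⟩ = 0.7 := rfl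
lemma htm8 : theta10 ⟨8, by norm_num⟩ = 1.1 := rfl
lemma htm9 : theta10 ⟨9, by norm_num⟩ = -0.6 := rfl
lemma htm10 : theta10 ⟨10, by norm_num⟩ = 0.9 := rfl
lemma htm11 : theta10 ⟨11, by norm_num⟩ = 0.64 := rfl
lemma htm12 : theta10 ⟨12, by norm_num⟩ = 0.36 := rfl
lemma htm13 : theta10 ⟨13, by norm_num⟩ = 1.44 := rfl
lemma htm14 : theta10 ⟨14, by norm_num⟩ = 0.64 := rfl
lemma htm15 : theta10 ⟨15, by norm_num⟩ = 0.49 := rfl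
lemma htm16 : theta10 ⟨16, by norm_num⟩ = 1.69 := rfl
lemma htm17 : theta10 ⟨17, by norm_num⟩ = 0.25 := rfl
lemma htm18 : theta10 ⟨18, by norm_num⟩ = 0.49 := rfl
lemma htm19 : theta10 ⟨19, by norm_num⟩ = 0.36 := rfl
lemma htm20 : theta10 ⟨20, by norm_num⟩ = 0.81 := rfl
lemma htm21 : theta10 ⟨21, by norm_num⟩ = 0.64 := rfl
lemma htm22 : theta10 ⟨22, by norm_num⟩ = 1.44 := rfl
lemma htm23 : theta10 ⟨23, by norm_num⟩ = 1.21 := rfl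
lemma htm24 : theta10 ⟨24, by norm_num⟩ = 1.96 := rfl
lemma htm25 : theta10 ⟨25, by norm_num⟩ = 0.36 := rfl

/-- Identifiability of Model 1: `θ_{1,0} ∈ Θ₁` and for every `θ₁ ∈ Θ₁`,
`Σ₁(θ₁) = Σ₁(θ_{1,0})` implies `θ₁ = θ_{1,0}`. -/
theorem model1_identifiability :
    theta10 ∈ Theta1 ∧
      ∀ θ1 ∈ Theta1, Sigma1 θ1 = Sigma1 theta10 → θ1 = theta10 := by
  constructor
  · constructor
    · intro i hi
      fin_cases i <;> revert hi <;> norm_num [Set.mem_union, Set.mem_Ioo, ht0, ht1, htm0, htm1, htm2, htm3, htm4, htm5, htm6, htm7, htm8, htm9, htm10, htm11, htm12, htm13, htm14, htm15, htm16, htm17, htm18, htm19, htm20, htm21, htm22, htm23, htm24, htm25]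
    · intro i hi
      fin_cases i <;> revert hi <;> norm_num [Set.mem_Ioo, ht0, ht1, htm0, htm1, htm2, htm3, htm4, htm5, htm6, htm7, htm8, htm9, htm10, htm11, htm12, htm13, htm14, htm15, htm16, htm17, htm18, htm19, htm20, htm21, htm22, htm23, htm24, htm25]
  intro θ _ h
  have E : ∀ i j, Sigma1 θ i j = Sigma1 theta10 i j := fun i j => congrFun (congrFun h i) j
  have e01 := E (Sum.inl 0) (Sum.inl 1)
  have e02 := E (Sum.inl 0) (Sum.inl 2)
  have e03 := E (Sum.inl 0) (Sum.inl 3)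
  have e12 := E (Sum.inl 1) (Sum.inl 2)
  have d00 := E (Sum.inl 0) (Sum.inl 0)
  have d11 := E (Sum.inl 1) (Sum.inl 1)
  have d22 := E (Sum.inl 2) (Sum.inl 2)
  have d33 := E (Sum.inl 3) (Sum.inl 3)
  have b00 := E (Sum.inl 0) (Sum.inr 0)
  have b01 := E (Sum.inl 0) (Sum.inr 1)
  have b02 := E (Sum.inl 0) (Sum.inr 2)
  have b03 := E (Sum.inl 0) (Sum.inr 3)
  have b04 := E (Sum.inl 0) (Sum.inr 4)
  have b05 := E (Sum.inl 0) (Sum.inr 5)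
  have b06 := E (Sum.inl 0) (Sum.inr 6)
  have b07 := E (Sum.inl 0) (Sum.inr 7)
  have c00 := E (Sum.inr 0) (Sum.inr 0)
  have c01 := E (Sum.inr 0) (Sum.inr 1)
  have c11 := E (Sum.inr 1) (Sum.inr 1)
  have c22 := E (Sum.inr 2) (Sum.inr 2)
  have c33 := E (Sum.inr 3) (Sum.inr 3)
  have c44 := E (Sum.inr 4) (Sum.inr 4)
  have c45 := E (Sum.inr 4) (Sum.inr 5)
  have c55 := E (Sum.inr 5) (Sum.inr 5)
  have c66 := E (Sum.inr 6) (Sum.inr 6)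
  have c77 := E (Sum.inr 7) (Sum.inr 7)
  norm_num [Sigma1, semCov, Matrix.mul_apply, Matrix.cons_val, Fin.sum_univ_succ, cvA, cvB, cvC, cvD, cvE, cvF,
    Fin.ext_iff, fv1, fv2, fv3, fv4, fv5, fv6, ht0, ht1, ht2, ht3, ht4, ht5, ht6, ht7, ht8,
    ht9, ht10, ht11, ht12, ht13, ht14, ht15, ht16, ht17, ht18, ht19, ht20, ht21, ht22, ht23,
    ht24, ht25, Matrix.diagonal]
    at e01 e02 e03 e12 d00 d11 d22 d33 b00 b01 b02 b03 b04 b05 b06 b07 c00 c01 c11 c22 c33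
      c44 c45 c55 c66 c77
  simp only [Matrix.cons_val] at e01 e02 e03 e12 d00 d11 d22 d33 b00 b01 b02 b03 b04 b05 b06 b07 c00 c01 c11 c22 c33 c44 c45 c55 c66 c77
  have h1 : θ 1 = 4/5 := by linear_combination (25/8)*e12 - (25/8)*(θ 1)*e01
  have h11 : θ 11 = 16/25 := by linear_combination (5/4)*e02 - (5/4)*(θ 11)*h1
  have h0 : θ 0 = 1/2 := by linear_combination (25/16)*e01 - (25/16)*(θ 0)*h11
  have h2 : θ 2 = 3/10 := by linear_combination (25/16)*e03 - (25/16)*(θ 2)*h11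
  have h9 : θ 9 = -(3/5) := by linear_combination (25/16)*b00 - (25/16)*(θ 9)*h11
  have h10 : θ 10 = 9/10 := by linear_combination (25/16)*b04 - (25/16)*(θ 10)*h11
  have h3 : θ 3 = 13/10 := by linear_combination (125/48)*(θ 3)*b00 - (125/48)*b01
  have h4 : θ 4 = 4/5 := by linear_combination (125/48)*(θ 4)*b00 - (125/48)*b02
  have h5 : θ 5 = 1/2 := by linear_combination (125/48)*(θ 5)*b00 - (125/48)*b03
  have h6 : θ 6 = 9/10 := by linear_combination (125/72)*b05 - (125/72)*(θ 6)*b04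
  have h7 : θ 7 = 7/10 := by linear_combination (125/72)*b06 - (125/72)*(θ 7)*b04
  have h8 : θ 8 = 11/10 := by linear_combination (125/72)*b07 - (125/72)*(θ 8)*b04
  have h12 : θ 12 = 9/25 := by linear_combination d00 - h11
  have h13 : θ 13 = 36/25 := by
    linear_combination d11 - θ 11*(θ 0 + 1/2)*h0 - (1/4)*h11
  have h14 : θ 14 = 16/25 := by
    linear_combination d22 - θ 11*(θ 1 + 4/5)*h1 - (16/25)*h11
  have h15 : θ 15 = 49/100 := by
    linear_combination d33 - θ 11*(θ 2 + 3/10)*h2 - (9/100)*h11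
  have h24 : θ 24 = 49/25 := by
    linear_combination (10/13)*c01 - (10/13)*(θ 9^2*θ 11 + θ 24)*h3
      - θ 11*(θ 9 - 3/5)*h9 - (9/25)*h11
  have h16 : θ 16 = 169/100 := by
    linear_combination c00 - θ 11*(θ 9 - 3/5)*h9 - (9/25)*h11 - h24
  have h17 : θ 17 = 1/4 := by
    linear_combination c11 - (θ 9^2*θ 11 + θ 24)*(θ 3 + 13/10)*h3
      - (169/100)*(θ 11*(θ 9 - 3/5)*h9 + (9/25)*h11 + h24)
  have h18 : θ 18 = 49/100 := by
    linear_combination c22 - (θ 9^2*θ 11 + θ 24)*(θ 4 + 4/5)*h4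
      - (16/25)*(θ 11*(θ 9 - 3/5)*h9 + (9/25)*h11 + h24)
  have h19 : θ 19 = 9/25 := by
    linear_combination c33 - (θ 9^2*θ 11 + θ 24)*(θ 5 + 1/2)*h5
      - (1/4)*(θ 11*(θ 9 - 3/5)*h9 + (9/25)*h11 + h24)
  have h25 : θ 25 = 9/25 := by
    linear_combination (10/9)*c45 - (10/9)*(θ 10^2*θ 11 + θ 25)*h6
      - θ 11*(θ 10 + 9/10)*h10 - (81/100)*h11
  have h20 : θ 20 = 81/100 := by
    linear_combination c44 - θ 11*(θ 10 + 9/10)*h10 - (81/100)*h11 - h25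
  have h21 : θ 21 = 16/25 := by
    linear_combination c55 - (θ 10^2*θ 11 + θ 25)*(θ 6 + 9/10)*h6
      - (81/100)*(θ 11*(θ 10 + 9/10)*h10 + (81/100)*h11 + h25)
  have h22 : θ 22 = 36/25 := by
    linear_combination c66 - (θ 10^2*θ 11 + θ 25)*(θ 7 + 7/10)*h7
      - (49/100)*(θ 11*(θ 10 + 9/10)*h10 + (81/100)*h11 + h25)
  have h23 : θ 23 = 121/100 := by
    linear_combination c77 - (θ 10^2*θ 11 + θ 25)*(θ 8 + 11/10)*h8
      - (121/100)*(θ 11*(θ 10 + 9/10)*h10 + (81/100)*h11 + h25)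
  funext i
  fin_cases i <;> norm_num [ht0, ht1, htm0, htm1, htm2, htm3, htm4, htm5, htm6, htm7, htm8, htm9, htm10, htm11, htm12, htm13, htm14, htm15, htm16, htm17, htm18, htm19, htm20, htm21, htm22, htm23, htm24, htm25] <;>
    first | exact h0 | exact h1 | exact h2 | exact h3 | exact h4 | exact h5 | exact h6 | exact h7 | exact h8 | exact h9 | exact h10 | exact h11 | exact h12 | exact h13 | exact h14 | exact h15 | exact h16 | exact h17 | exact h18 | exact h19 | exact h20 | exact h21 | exact h22 | exact h23 | exact h24 | exact h25
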